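/- For every prime power q ≥ 5, the minimum distance of the toric code C_{P_6^(14)} over 𝔽_q equals (q-1)² − (3q−5) = ((q-1)−2)·((q-1)−1), where P_6^(14) = conv{(0,0),(2,0),(2,1),(0,1)}. -/

import Mathlib

/-- Embed a lattice point of `ℤ²` into the real plane. -/
def toRealPt (p : ℤ × ℤ) : ℝ × ℝ := ((p.1 : ℝ), (p.2 : ℝ))

/-- The lattice points of the (possibly degenerate) convex lattice polygon spanned by a
finite set `V` of points of `ℤ²`, i.e. the points of `ℤ²` lying in the convex hull of `V`. -/
def latticePts (V : Finset (ℤ × ℤ)) : Set (ℤ × ℤ) :=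
  {p | toRealPt p ∈ convexHull ℝ (toRealPt '' (V : Set (ℤ × ℤ)))}

/-- The integer affine map `T(x) = Mx + v` on `ℤ²`. -/
def affMap (M : Matrix (Fin 2) (Fin 2) ℤ) (v : ℤ × ℤ) (p : ℤ × ℤ) : ℤ × ℤ :=
  (M 0 0 * p.1 + M 0 1 * p.2 + v.1, M 1 0 * p.1 + M 1 1 * p.2 + v.2)

/-- Two subsets of `ℤ²` are lattice equivalent if some affine map `T(x) = Mx + v`,
with `M ∈ GL(2,ℤ)` and `v ∈ ℤ²`, maps the first bijectively onto the second. -/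
def LatticeEquiv (S S' : Set (ℤ × ℤ)) : Prop :=
  ∃ (M : Matrix (Fin 2) (Fin 2) ℤ) (v : ℤ × ℤ),
    IsUnit M.det ∧ Set.BijOn (affMap M v) S S'

/-- Evaluation of the Laurent monomial `x^{m₁} y^{m₂}` at a point of the torus `(F*)²`. -/
def evalMonomial {F : Type*} [Field F] (m : ℤ × ℤ) (t : Fˣ × Fˣ) : F :=
  ((t.1 ^ m.1 : Fˣ) : F) * ((t.2 ^ m.2 : Fˣ) : F)

/-- The toric code over `F` associated to a set `S ⊆ ℤ²` of exponent vectors: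
the span of the evaluation vectors of the monomials `x^{m₁} y^{m₂}`, `m ∈ S`. -/
def toricCode (F : Type*) [Field F] (S : Set (ℤ × ℤ)) :
    Submodule F ((Fˣ × Fˣ) → F) :=
  Submodule.span F ((fun m => evalMonomial m) '' S)

/-- The Hamming weight of a word: the number of nonzero coordinates. -/
noncomputable def hammingWt {X F : Type*} [Zero F] (c : X → F) : ℕ :=
  Set.ncard {x | c x ≠ 0}

/-- The minimum distance of a linear code: the least Hamming weight of a nonzero codeword. -/
noncomputable def minDist {F X : Type*} [Field F] (C : Submodule F (X → F)) : ℕ :=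
  sInf {w | ∃ c ∈ C, c ≠ 0 ∧ hammingWt c = w}

/-- Monomial equivalence of linear codes inside `F^X`. -/
def MonomiallyEquiv {F X : Type*} [Field F] (C₁ C₂ : Submodule F (X → F)) : Prop :=
  ∃ (π : Equiv.Perm X) (d : X → Fˣ),
    (C₂ : Set (X → F)) = (fun c x => (d x : F) * c (π x)) '' (C₁ : Set (X → F))

/-- The vertex sets of the fourteen polygons `P₆⁽ⁱ⁾`, `i = 1, …, 14`. -/
def P6 : ℕ → Finset (ℤ × ℤ)
  | 1 => {(0,0),(5,0)}
  | 2 => {(0,0),(4,0),(0,1)}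
  | 3 => {(0,0),(3,0),(1,1),(0,1)}
  | 4 => {(0,-1),(3,0),(0,1)}
  | 5 => {(-1,-1),(3,0),(0,1)}
  | 6 => {(0,0),(1,0),(3,3),(0,1)}
  | 7 => {(0,0),(0,1),(3,0),(3,-1)}
  | 8 => {(-1,0),(0,1),(2,0),(0,-1)}
  | 9 => {(0,-1),(2,0),(1,1),(0,1)}
  | 10 => {(0,-1),(2,0),(-1,2)}
  | 11 => {(-1,-1),(1,0),(1,1),(0,2)}
  | 12 => {(-1,0),(0,-1),(1,0),(1,1),(0,1)}
  | 13 => {(0,0),(2,0),(0,2)}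
  | 14 => {(0,0),(2,0),(2,1),(0,1)}
  | _ => ∅


lemma vec6_0 {α : Type*} (x0 x1 x2 x3 x4 x5 : α) : ![x0,x1,x2,x3,x4,x5] (0 : Fin 6) = x0 := rfl
lemma vec6_1 {α : Type*} (x0 x1 x2 x3 x4 x5 : α) : ![x0,x1,x2,x3,x4,x5] (1 : Fin 6) = x1 := rfl
lemma vec6_2 {α : Type*} (x0 x1 x2 x3 x4 x5 : α) : ![x0,x1,x2,x3,x4,x5] (2 : Fin 6) = x2 := rfl
lemma vec6_3 {α : Type*} (x0 x1 x2 x3 x4 x5 : α) : ![x0,x1,x2,x3,x4,x5] (3 : Fin 6) = x3 := rfl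
lemma vec6_4 {α : Type*} (x0 x1 x2 x3 x4 x5 : α) : ![x0,x1,x2,x3,x4,x5] (4 : Fin 6) = x4 := rfl
lemma vec6_5 {α : Type*} (x0 x1 x2 x3 x4 x5 : α) : ![x0,x1,x2,x3,x4,x5] (5 : Fin 6) = x5 := rfl

def P14 : Finset (ℤ × ℤ) := {(0,0),(2,0),(2,1),(0,1)}

lemma lp14 : latticePts P14
    = ({(0,0),(1,0),(2,0),(0,1),(1,1),(2,1)} : Set (ℤ × ℤ)) := by
  have himg : toRealPt '' (P14 : Set (ℤ × ℤ))
      = ({((0:ℝ),(0:ℝ)), (2,0), (2,1), (0,1)} : Set (ℝ × ℝ)) := by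
    simp [P14, Set.image_insert_eq, toRealPt]
  ext p
  constructor
  · intro hp
    have hsub : convexHull ℝ (toRealPt '' (P14 : Set (ℤ × ℤ)))
        ⊆ Set.Icc (0:ℝ) 2 ×ˢ Set.Icc (0:ℝ) 1 := by
      apply convexHull_min
      · rw [himg]
        rintro x (rfl | rfl | rfl | rfl) <;> constructor <;> constructor <;> norm_num
      · exact (convex_Icc (0:ℝ) 2).prod (convex_Icc (0:ℝ) 1)
    have h2 := hsub hp
    obtain ⟨⟨h1, h2⟩, h3, h4⟩ := h2
    simp only [toRealPt] at h1 h2 h3 h4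
    have e1 : 0 ≤ p.1 := by exact_mod_cast h1
    have e2 : p.1 ≤ 2 := by exact_mod_cast h2
    have e3 : 0 ≤ p.2 := by exact_mod_cast h3
    have e4 : p.2 ≤ 1 := by exact_mod_cast h4
    obtain ⟨x, y⟩ := p
    simp only at e1 e2 e3 e4
    interval_cases x <;> interval_cases y <;> simp
  · intro hp
    have hC := convex_convexHull ℝ (toRealPt '' (P14 : Set (ℤ × ℤ)))
    have hv : ∀ x ∈ ({((0:ℝ),(0:ℝ)), (2,0), (2,1), (0,1)} : Set (ℝ × ℝ)),
        x ∈ convexHull ℝ (toRealPt '' (P14 : Set (ℤ × ℤ))) := by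
      rw [← himg]; exact fun x hx => subset_convexHull ℝ _ hx
    have h00 := hv (0,0) (by simp)
    have h20 := hv (2,0) (by simp)
    have h21 := hv (2,1) (by simp)
    have h01 := hv (0,1) (by simp)
    simp only [latticePts, Set.mem_setOf_eq]
    rcases hp with rfl | rfl | rfl | rfl | rfl | rfl
    · simpa [toRealPt] using h00
    · have := hC h00 h20 (by norm_num : (0:ℝ) ≤ 1/2) (by norm_num : (0:ℝ) ≤ 1/2) (by norm_num)
      convert this using 1
      norm_num [toRealPt, Prod.ext_iff, Prod.smul_def]
    · simpa [toRealPt] using h20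
    · simpa [toRealPt] using h01
    · have := hC h01 h21 (by norm_num : (0:ℝ) ≤ 1/2) (by norm_num : (0:ℝ) ≤ 1/2) (by norm_num)
      convert this using 1
      norm_num [toRealPt, Prod.ext_iff, Prod.smul_def]
    · simpa [toRealPt] using h21

def pts14 : Fin 6 → ℤ × ℤ := ![(0,0),(1,0),(2,0),(0,1),(1,1),(2,1)]

-- fiberwise weight
lemma wt_fiber {α β F : Type*} [Fintype α] [Fintype β] [Zero F] (c : α × β → F) :
    hammingWt c = ∑ a : α, Nat.card {b : β // c (a, b) ≠ 0} := by
  classical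
  rw [hammingWt, ← Nat.card_coe_set_eq]
  have h1 : Nat.card ↑{x : α × β | c x ≠ 0}
      = Nat.card (Σ a : α, {b : β // c (a, b) ≠ 0}) :=
    Nat.card_congr (Equiv.subtypeProdEquivSigmaSubtype fun a b => c (a, b) ≠ 0)
  rw [h1, Nat.card_eq_fintype_card, Fintype.card_sigma]
  simp [Nat.card_eq_fintype_card]

variable {F : Type} [Field F]

lemma comb_eval (a : Fin 6 → F) (t : Fˣ × Fˣ) :
    (∑ i, a i • evalMonomial (pts14 i)) t
      = (a 0 + a 1 * (t.1 : F) + a 2 * (t.1 : F)^2)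
        + (a 3 + a 4 * (t.1 : F) + a 5 * (t.1 : F)^2) * (t.2 : F) := by
  have e0 : pts14 0 = (0,0) := rfl
  have e1 : pts14 1 = (1,0) := rfl
  have e2 : pts14 2 = (2,0) := rfl
  have e3 : pts14 3 = (0,1) := rfl
  have e4 : pts14 4 = (1,1) := rfl
  have e5 : pts14 5 = (2,1) := rfl
  simp only [Finset.sum_apply, Fin.sum_univ_six, Pi.smul_apply, smul_eq_mul,
    e0, e1, e2, e3, e4, e5, evalMonomial]
  simp only [zpow_zero, zpow_one, zpow_two, Units.val_mul, Units.val_one]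
  ring

lemma image_eq :
    (fun m => evalMonomial (F := F) m) '' ({(0,0),(1,0),(2,0),(0,1),(1,1),(2,1)} : Set (ℤ × ℤ))
      = Set.range (fun i => evalMonomial (F := F) (pts14 i)) := by
  ext c
  constructor
  · rintro ⟨m, hm, rfl⟩
    rcases hm with rfl | rfl | rfl | rfl | rfl | rfl
    exacts [⟨0, rfl⟩, ⟨1, rfl⟩, ⟨2, rfl⟩, ⟨3, rfl⟩, ⟨4, rfl⟩, ⟨5, rfl⟩]
  · rintro ⟨i, rfl⟩
    fin_cases i
    · exact ⟨(0,0), by simp, rfl⟩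
    · exact ⟨(1,0), by simp, rfl⟩
    · exact ⟨(2,0), by simp, rfl⟩
    · exact ⟨(0,1), by simp, rfl⟩
    · exact ⟨(1,1), by simp, rfl⟩
    · exact ⟨(2,1), by simp, rfl⟩

-- Lower bound
lemma lower_bound [Fintype F] (c : (Fˣ × Fˣ) → F) (a : Fin 6 → F)
    (hc : (∑ i, a i • evalMonomial (pts14 i)) = c) (hc0 : c ≠ 0) :
    (Fintype.card F - 3) * (Fintype.card F - 2) ≤ hammingWt c := by
  classical
  set q := Fintype.card F with hqdef
  have hcard : Fintype.card Fˣ = q - 1 := by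
    rw [hqdef]
    have : Nat.card Fˣ = Nat.card F - 1 := Nat.card_units (α := F)
    simpa [Nat.card_eq_fintype_card] using this
  set PA : Polynomial F := Polynomial.C (a 0) + Polynomial.C (a 1) * Polynomial.X
      + Polynomial.C (a 2) * Polynomial.X ^ 2 with hPA
  set PB : Polynomial F := Polynomial.C (a 3) + Polynomial.C (a 4) * Polynomial.X
      + Polynomial.C (a 5) * Polynomial.X ^ 2 with hPB
  have heval : ∀ t : Fˣ × Fˣ, c t = PA.eval (t.1 : F) + PB.eval (t.1 : F) * (t.2 : F) := by
    intro t
    rw [← hc, comb_eval]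
    simp [hPA, hPB]
  have hnz : PA ≠ 0 ∨ PB ≠ 0 := by
    by_contra h
    push_neg at h
    apply hc0
    funext t
    rw [heval t, h.1, h.2]
    simp
  -- the "bad" set of t1 where both PA and PB vanish
  set Bad : Finset Fˣ := Finset.univ.filter
      (fun t1 : Fˣ => PA.eval (t1 : F) = 0 ∧ PB.eval (t1 : F) = 0) with hBad
  have hBadcard : Bad.card ≤ 2 := by
    obtain ⟨P, hP0, hPd, hPz⟩ : ∃ P : Polynomial F, P ≠ 0 ∧ P.natDegree ≤ 2 ∧
        ∀ t1 ∈ Bad, P.eval (t1 : F) = 0 := by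
      rcases hnz with h | h
      · refine ⟨PA, h, ?_, fun t1 ht1 => ?_⟩
        · rw [hPA]; compute_degree
        · exact ((Finset.mem_filter.1 ht1).2).1
      · refine ⟨PB, h, ?_, fun t1 ht1 => ?_⟩
        · rw [hPB]; compute_degree
        · exact ((Finset.mem_filter.1 ht1).2).2
    have hinj : Set.InjOn (fun t1 : Fˣ => (t1 : F)) Bad := fun x _ y _ h => Units.ext h
    have hsub : ∀ t1 ∈ Bad, (t1 : F) ∈ P.roots.toFinset := by
      intro t1 ht1
      rw [Multiset.mem_toFinset, Polynomial.mem_roots hP0]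
      exact hPz t1 ht1
    calc Bad.card ≤ P.roots.toFinset.card :=
          Finset.card_le_card_of_injOn _ hsub hinj
      _ ≤ Multiset.card P.roots := P.roots.toFinset_card_le
      _ ≤ P.natDegree := P.card_roots'
      _ ≤ 2 := hPd
  -- fiberwise count
  rw [wt_fiber]
  have hfib : ∀ t1 ∈ Finset.univ \ Bad, q - 2 ≤ Nat.card {t2 : Fˣ // c (t1, t2) ≠ 0} := by
    intro t1 ht1
    have hng : ¬ (PA.eval (t1 : F) = 0 ∧ PB.eval (t1 : F) = 0) := by
      intro h
      exact (Finset.mem_sdiff.1 ht1).2 (Finset.mem_filter.2 ⟨Finset.mem_univ _, h⟩)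
    have hle1 : Fintype.card {t2 : Fˣ // c (t1, t2) = 0} ≤ 1 := by
      rw [Fintype.card_le_one_iff]
      rintro ⟨y, hy⟩ ⟨y', hy'⟩
      rw [heval] at hy hy'
      have hB : PB.eval (t1 : F) ≠ 0 := by
        intro h0
        rw [h0] at hy
        simp at hy
        exact hng ⟨hy, h0⟩
      have : (y : F) = (y' : F) := by
        have := hy.trans hy'.symm
        exact mul_left_cancel₀ hB (add_left_cancel this)
      exact Subtype.ext (Units.ext this)
    have hcompl : Fintype.card {t2 : Fˣ // c (t1, t2) ≠ 0}
        = Fintype.card Fˣ - Fintype.card {t2 : Fˣ // c (t1, t2) = 0} :=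
      Fintype.card_subtype_compl _
    rw [Nat.card_eq_fintype_card, hcompl, hcard]
    omega
  calc (q - 3) * (q - 2) ≤ (Finset.univ \ Bad).card * (q - 2) := by
        have : q - 1 - 2 ≤ (Finset.univ \ Bad).card := by
          rw [Finset.card_sdiff_of_subset (Finset.subset_univ _), Finset.card_univ, hcard]
          omega
        have h3 : q - 3 ≤ (Finset.univ \ Bad).card := by omega
        exact Nat.mul_le_mul_right _ h3
    _ ≤ ∑ t1 ∈ Finset.univ \ Bad, Nat.card {t2 : Fˣ // c (t1, t2) ≠ 0} := by
        have := Finset.card_nsmul_le_sum (Finset.univ \ Bad)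
          (fun t1 => Nat.card {t2 : Fˣ // c (t1, t2) ≠ 0}) (q - 2) hfib
        simpa [smul_eq_mul] using this
    _ ≤ ∑ t1 : Fˣ, Nat.card {t2 : Fˣ // c (t1, t2) ≠ 0} :=
        Finset.sum_le_sum_of_subset (Finset.sdiff_subset)

lemma wt_upper [Fintype F] (u w : Fˣ) (huw : u ≠ w) :
    hammingWt (fun t : Fˣ × Fˣ => ((t.1:F) - (u:F)) * ((t.1:F) - (w:F)) * ((t.2:F) - 1))
      = (Nat.card Fˣ - 2) * (Nat.card Fˣ - 1) := by
  classical
  rw [wt_fiber]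
  have hzero : ∀ t1 ∈ ({u, w} : Finset Fˣ),
      Nat.card {t2 : Fˣ // ((t1:F) - (u:F)) * ((t1:F) - (w:F)) * ((t2:F) - 1) ≠ 0} = 0 := by
    intro t1 ht1
    have : IsEmpty {t2 : Fˣ // ((t1:F) - (u:F)) * ((t1:F) - (w:F)) * ((t2:F) - 1) ≠ 0} := by
      constructor
      rintro ⟨y, hy⟩
      apply hy
      rcases Finset.mem_insert.1 ht1 with rfl | ht1
      · simp
      · rw [Finset.mem_singleton.1 ht1]; simp
    exact Nat.card_of_isEmpty
  have hinner : ∀ t1 : Fˣ, t1 ∉ ({u, w} : Finset Fˣ) →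
      Nat.card {t2 : Fˣ // ((t1:F) - (u:F)) * ((t1:F) - (w:F)) * ((t2:F) - 1) ≠ 0}
        = Nat.card Fˣ - 1 := by
    intro t1 ht1
    have hu : t1 ≠ u := fun h => ht1 (by simp [h])
    have hw : t1 ≠ w := fun h => ht1 (by simp [h])
    have hK : ((t1:F) - (u:F)) * ((t1:F) - (w:F)) ≠ 0 :=
      mul_ne_zero (sub_ne_zero.2 fun h => hu (Units.ext h))
        (sub_ne_zero.2 fun h => hw (Units.ext h))
    have hiff : ∀ t2 : Fˣ,
        (((t1:F) - (u:F)) * ((t1:F) - (w:F)) * ((t2:F) - 1) ≠ 0) ↔ ¬ (t2 = 1) := by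
      intro t2
      rw [mul_ne_zero_iff]
      constructor
      · rintro ⟨-, h⟩ rfl; simp at h
      · intro h
        exact ⟨hK, sub_ne_zero.2 fun h' => h (Units.ext (by simpa using h'))⟩
    rw [Nat.card_congr (Equiv.subtypeEquivRight hiff), Nat.card_eq_fintype_card,
      Fintype.card_subtype_compl, Fintype.card_subtype_eq, Nat.card_eq_fintype_card]
  rw [← Finset.sum_subset (Finset.subset_univ (Finset.univ \ ({u, w} : Finset Fˣ)))
      (by
        intro t1 _ ht1
        simp only [Finset.mem_sdiff, Finset.mem_univ, true_and, not_not] at ht1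
        exact hzero t1 ht1)]
  rw [Finset.sum_congr rfl (fun t1 ht1 => hinner t1 (Finset.mem_sdiff.1 ht1).2),
    Finset.sum_const, smul_eq_mul]
  congr 1
  rw [Finset.card_sdiff_of_subset (Finset.subset_univ _), Finset.card_univ,
    Finset.card_insert_of_notMem (by simpa using huw), Finset.card_singleton,
    Nat.card_eq_fintype_card]

/-- for every prime power `q ≥ 5`, the minimum distance of `C_{P₆⁽¹⁴⁾}`
over `𝔽_q` equals `(q-1)² − (3q−5) = ((q-1)−2)((q-1)−1)`. -/
theorem minDist_P6_14 (q : ℕ) (hq : IsPrimePow q) (hq5 : 5 ≤ q)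
    (F : Type) [Field F] [Fintype F] (hF : Fintype.card F = q) :
    (minDist (toricCode F (latticePts (P6 14))) : ℤ)
      = ((q:ℤ) - 1)^2 - (3 * (q:ℤ) - 5) := by
  classical
  have hlat : latticePts (P6 14)
      = ({(0,0),(1,0),(2,0),(0,1),(1,1),(2,1)} : Set (ℤ × ℤ)) := by
    have : P6 14 = P14 := rfl
    rw [show (P6 14) = P14 from rfl]
    exact lp14
  have hcode : toricCode F (latticePts (P6 14))
      = Submodule.span F (Set.range fun i => evalMonomial (F := F) (pts14 i)) := by
    rw [toricCode, hlat, image_eq]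
  have hmem : ∀ c, c ∈ toricCode F (latticePts (P6 14)) ↔
      ∃ a : Fin 6 → F, ∑ i, a i • evalMonomial (pts14 i) = c := by
    intro c; rw [hcode]; exact Submodule.mem_span_range_iff_exists_fun F
  have hcardU : Nat.card Fˣ = q - 1 := by
    rw [Nat.card_units (α := F), Nat.card_eq_fintype_card, hF]
  obtain ⟨u, w, huw⟩ : ∃ u w : Fˣ, u ≠ w := by
    apply Fintype.exists_pair_of_one_lt_card
    rw [← Nat.card_eq_fintype_card]
    omega
  set c0 : (Fˣ × Fˣ) → F :=
    fun t => ((t.1:F) - (u:F)) * ((t.1:F) - (w:F)) * ((t.2:F) - 1) with hc0def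
  have hwt0 : hammingWt c0 = (q - 3) * (q - 2) := by
    rw [hc0def, wt_upper u w huw, hcardU]
    congr 1 <;> omega
  have hmem0 : c0 ∈ toricCode F (latticePts (P6 14)) := by
    rw [hmem]
    refine ⟨![-((u:F)*(w:F)), (u:F)+(w:F), -1, (u:F)*(w:F), -((u:F)+(w:F)), 1], ?_⟩
    funext t
    rw [comb_eval]
    simp only [vec6_0, vec6_1, vec6_2, vec6_3, vec6_4, vec6_5]
    show _ = ((t.1:F) - (u:F)) * ((t.1:F) - (w:F)) * ((t.2:F) - 1)
    ring
  have hpos : 0 < (q - 3) * (q - 2) := Nat.mul_pos (by omega) (by omega)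
  have hne : c0 ≠ 0 := by
    intro h
    rw [h] at hwt0
    have : hammingWt (0 : (Fˣ × Fˣ) → F) = 0 := by
      simp [hammingWt]
    omega
  have hmin : minDist (toricCode F (latticePts (P6 14))) = (q - 3) * (q - 2) := by
    rw [minDist]
    apply le_antisymm
    · exact Nat.sInf_le ⟨c0, hmem0, hne, hwt0⟩
    · refine le_csInf ⟨(q - 3) * (q - 2), c0, hmem0, hne, hwt0⟩ ?_
      rintro w' ⟨c, hcmem, hcne, rfl⟩
      obtain ⟨a, ha⟩ := (hmem c).1 hcmem
      have := lower_bound c a ha hcne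
      rwa [hF] at this
  rw [hmin]
  have h3 : ((q - 3 : ℕ) : ℤ) = (q:ℤ) - 3 := by omega
  have h2 : ((q - 2 : ℕ) : ℤ) = (q:ℤ) - 2 := by omega
  push_cast [h3, h2]
  ring
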